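/- Pre-processing cannot decrease the robustness of incompatibility: if (M, N) ≤_prae (A, B), i.e., M = ℰ* ∘ A and N = ℰ* ∘ B for a channel ℰ, then W(M, N) ≥ W(A, B), where W(A, B) = sup{t ∈ [0,1] : ∃ POVMs A₁, B₁ such that (t•A + (1-t)•A₁, t•B + (1-t)•B₁) is jointly measurable}. -/

import Mathlib

open scoped ComplexOrder

open Matrix in
/-- The Choi matrix of a linear map between matrix algebras. -/
noncomputable def choi {n m : Type*} [Fintype n] [DecidableEq n] [Fintype m]
    (Φ : Matrix n n ℂ →ₗ[ℂ] Matrix m m ℂ) : Matrix (n × m) (n × m) ℂ :=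
  Matrix.of fun p q => Φ (Matrix.single p.1 q.1 1) p.2 q.2

/-- Complete positivity of a linear map between matrix algebras
(positivity of its Choi matrix). -/
def IsCP {n m : Type*} [Fintype n] [DecidableEq n] [Fintype m]
    (Φ : Matrix n n ℂ →ₗ[ℂ] Matrix m m ℂ) : Prop :=
  (choi Φ).PosSemidef

/-- Trace preservation. -/
def IsTP {n m : Type*} [Fintype n] [Fintype m]
    (Φ : Matrix n n ℂ →ₗ[ℂ] Matrix m m ℂ) : Prop :=
  ∀ ρ, (Φ ρ).trace = ρ.trace

/-- A quantum channel: a completely positive trace-preserving linear map. -/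
def IsChannel {n m : Type*} [Fintype n] [DecidableEq n] [Fintype m]
    (Φ : Matrix n n ℂ →ₗ[ℂ] Matrix m m ℂ) : Prop :=
  IsCP Φ ∧ IsTP Φ

/-- A (finite-outcome) POVM: positive operators summing to the identity. -/
def IsPOVM {n Ω : Type*} [Fintype n] [DecidableEq n] [Fintype Ω]
    (M : Ω → Matrix n n ℂ) : Prop :=
  (∀ x, (M x).PosSemidef) ∧ ∑ x, M x = 1

/-- Joint measurability of two POVMs: existence of a joint POVM with the
given marginals. -/
def JointlyMeasurable {n Ω Ω' : Type*} [Fintype n] [DecidableEq n]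
    [Fintype Ω] [Fintype Ω']
    (A : Ω → Matrix n n ℂ) (B : Ω' → Matrix n n ℂ) : Prop :=
  ∃ G : Ω × Ω' → Matrix n n ℂ, IsPOVM G ∧
    (∀ x, ∑ y, G (x, y) = A x) ∧ (∀ y, ∑ x, G (x, y) = B y)

/-- The robustness of incompatibility of a pair of POVMs. -/
noncomputable def Wrob {n Ω Ω' : Type*} [Fintype n] [DecidableEq n]
    [Fintype Ω] [Fintype Ω']
    (A : Ω → Matrix n n ℂ) (B : Ω' → Matrix n n ℂ) : ℝ :=
  sSup {t : ℝ | t ∈ Set.Icc (0 : ℝ) 1 ∧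
    ∃ A₁ : Ω → Matrix n n ℂ, ∃ B₁ : Ω' → Matrix n n ℂ,
      IsPOVM A₁ ∧ IsPOVM B₁ ∧
      JointlyMeasurable (fun x => t • A x + (1 - t) • A₁ x)
        (fun y => t • B y + (1 - t) • B₁ y)}

open Matrix in
lemma apply_entry' {n m : Type*} [Fintype n] [DecidableEq n] [Fintype m]
    (Λ : Matrix n n ℂ →ₗ[ℂ] Matrix m m ℂ) (ρ : Matrix n n ℂ) (i j : m) :
    Λ ρ i j = ∑ p, ∑ q, ρ p q * choi Λ (p, i) (q, j) := by
  conv_lhs => rw [matrix_eq_sum_single ρ]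
  rw [map_sum, Matrix.sum_apply]
  refine Finset.sum_congr rfl fun p _ => ?_
  rw [map_sum, Matrix.sum_apply]
  refine Finset.sum_congr rfl fun q _ => ?_
  have h1 : Matrix.single p q (ρ p q) = ρ p q • Matrix.single p q 1 := by
    rw [Matrix.smul_single, smul_eq_mul, mul_one]
  rw [h1, _root_.map_smul, Matrix.smul_apply, smul_eq_mul]
  rfl

open Matrix in
lemma posSemidef_sum' {m ι : Type*} [Fintype m] (s : Finset ι) (f : ι → Matrix m m ℂ)
    (h : ∀ i ∈ s, (f i).PosSemidef) : (∑ i ∈ s, f i).PosSemidef := by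
  refine Matrix.posSemidef_iff_dotProduct_mulVec.mpr ⟨?_, ?_⟩
  · show (∑ i ∈ s, f i)ᴴ = _
    rw [Matrix.conjTranspose_sum]
    exact Finset.sum_congr rfl fun i hi => (h i hi).1
  · intro x
    have hmv : (∑ i ∈ s, f i) *ᵥ x = ∑ i ∈ s, f i *ᵥ x := by
      ext a
      simp only [Matrix.mulVec, dotProduct, Matrix.sum_apply, Finset.sum_mul,
        Finset.sum_apply]
      exact Finset.sum_comm
    have hdp : star x ⬝ᵥ ∑ i ∈ s, f i *ᵥ x = ∑ i ∈ s, star x ⬝ᵥ (f i *ᵥ x) := by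
      simp only [dotProduct, Finset.sum_apply, Finset.mul_sum]
      exact Finset.sum_comm
    rw [hmv, hdp]
    exact Finset.sum_nonneg fun i hi => (h i hi).dotProduct_mulVec_nonneg x

open Matrix in
lemma IsCP.posMap {n m : Type*} [Fintype n] [DecidableEq n] [Fintype m]
    {Λ : Matrix n n ℂ →ₗ[ℂ] Matrix m m ℂ} (h : IsCP Λ)
    {ρ : Matrix n n ℂ} (hρ : ρ.PosSemidef) : (Λ ρ).PosSemidef := by
  obtain ⟨K, hK⟩ : ∃ K : Matrix (n × m) (n × m) ℂ, choi Λ = Kᴴ * K := by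
    classical
    open scoped MatrixOrder Matrix.Norms.L2Operator in
    exact CStarAlgebra.nonneg_iff_eq_star_mul_self.mp h.nonneg
  -- Kraus operators
  set V : (n × m) → Matrix n m ℂ := fun r => Matrix.of (fun p i => K r (p, i)) with hV
  have key : Λ ρ = ∑ r : n × m, (V r)ᴴ * ρ * (V r) := by
    ext i j
    rw [apply_entry', Matrix.sum_apply]
    have hC : ∀ (a b : n × m), choi Λ a b = ∑ r, star (K r a) * K r b := by
      intro a b
      rw [hK, Matrix.mul_apply]
      exact Finset.sum_congr rfl fun r _ => by rw [Matrix.conjTranspose_apply]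
    calc ∑ p, ∑ q, ρ p q * choi Λ (p, i) (q, j)
        = ∑ p, ∑ q, ∑ r, star (K r (p, i)) * (ρ p q * K r (q, j)) := by
          refine Finset.sum_congr rfl fun p _ => Finset.sum_congr rfl fun q _ => ?_
          rw [hC, Finset.mul_sum]
          exact Finset.sum_congr rfl fun r _ => by ring
      _ = ∑ p, ∑ r, ∑ q, star (K r (p, i)) * (ρ p q * K r (q, j)) :=
          Finset.sum_congr rfl fun p _ => Finset.sum_comm
      _ = ∑ r, ∑ p, ∑ q, star (K r (p, i)) * (ρ p q * K r (q, j)) := Finset.sum_comm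
      _ = ∑ r, ((V r)ᴴ * ρ * (V r)) i j := by
          refine Finset.sum_congr rfl fun r _ => ?_
          rw [Matrix.mul_assoc, Matrix.mul_apply]
          refine Finset.sum_congr rfl fun p _ => ?_
          rw [Matrix.conjTranspose_apply, Matrix.mul_apply, Finset.mul_sum]
          rfl
  rw [key]
  exact posSemidef_sum' _ _ fun r _ => hρ.conjTranspose_mul_mul_same (V r)

lemma isPOVM_comp {n k Ω'' : Type*} [Fintype n] [DecidableEq n] [Fintype k] [DecidableEq k] [Fintype Ω'']
    {Λ : Matrix n n ℂ →ₗ[ℂ] Matrix k k ℂ} (hΛcp : IsCP Λ) (hΛ1 : Λ 1 = 1)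
    (M : Ω'' → Matrix n n ℂ) (hM : IsPOVM M) : IsPOVM (fun x => Λ (M x)) :=
  ⟨fun x => hΛcp.posMap (hM.1 x), by rw [← map_sum, hM.2, hΛ1]⟩

theorem stmt10 {n k Ω Ω' : Type*} [Fintype n] [DecidableEq n] [Fintype k] [DecidableEq k]
    [Fintype Ω] [Fintype Ω']
    (A : Ω → Matrix n n ℂ) (B : Ω' → Matrix n n ℂ)
    (hA : IsPOVM A) (hB : IsPOVM B)
    -- `Λ = ℰ*` is the unital completely positive dual of a channel `ℰ`
    (Λ : Matrix n n ℂ →ₗ[ℂ] Matrix k k ℂ) (hΛcp : IsCP Λ) (hΛ1 : Λ 1 = 1) :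
    Wrob A B ≤ Wrob (fun x => Λ (A x)) (fun y => Λ (B y)) := by
  unfold Wrob
  apply Real.sSup_le
  · rintro t ⟨htIcc, A₁, B₁, hA₁, hB₁, G, hG, hGA, hGB⟩
    have hbdd : BddAbove {t : ℝ | t ∈ Set.Icc (0 : ℝ) 1 ∧
        ∃ A₂ : Ω → Matrix k k ℂ, ∃ B₂ : Ω' → Matrix k k ℂ,
          IsPOVM A₂ ∧ IsPOVM B₂ ∧
          JointlyMeasurable (fun x => t • Λ (A x) + (1 - t) • A₂ x)
            (fun y => t • Λ (B y) + (1 - t) • B₂ y)} := ⟨1, fun s hs => hs.1.2⟩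
    refine le_csSup hbdd ?_
    refine ⟨htIcc, fun x => Λ (A₁ x), fun y => Λ (B₁ y), isPOVM_comp hΛcp hΛ1 A₁ hA₁,
      isPOVM_comp hΛcp hΛ1 B₁ hB₁, fun p => Λ (G p), isPOVM_comp hΛcp hΛ1 G hG, fun x => ?_, fun y => ?_⟩
    · rw [← map_sum, hGA x]
      simp only [map_add, LinearMap.map_smul_of_tower]
    · rw [← map_sum, hGB y]
      simp only [map_add, LinearMap.map_smul_of_tower]
  · exact Real.sSup_nonneg fun t ht => ht.1.1
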